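/- Let A be densely defined and closed with A*A ≥ εI and R ∈ B(H). If λ₀ ≠ 0 is an eigenvalue of iG_{A,R} with eigenvector (u, v) ∈ dom(A*A) ⊕ dom(A), then (v, -iAu) ∈ dom(A) ⊕ dom(A*) is an eigenvector of the perturbed Dirac-type operator Q + S = ((-iR, A*), (A, 0)) with the same eigenvalue λ₀. -/

import Mathlib

/-- Let `A` be densely defined and closed with `A*A ≥ εI` and
`R ∈ B(H)`.  If `λ₀ ≠ 0` is an eigenvalue of `iG_{A,R} = i((0, I), (-A*A, -R))` with
eigenvector `(u, v) ∈ dom(A*A) ⊕ dom(A)`, then `(v, -iAu) ∈ dom(A) ⊕ dom(A*)` is an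
eigenvector of the perturbed Dirac-type operator `Q + S = ((-iR, A*), (A, 0))` with
the same eigenvalue `λ₀`. -/
theorem stmt_2 {H : Type*} [NormedAddCommGroup H] [InnerProductSpace ℂ H] [CompleteSpace H]
    (domA domAs : Submodule ℂ H) (A As : H →ₗ[ℂ] H) (R : H →L[ℂ] H)
    (hdense : Dense (domA : Set H))
    (hclosed : IsClosed {p : H × H | p.1 ∈ domA ∧ p.2 = A p.1})
    (hadj : ∀ u ∈ domA, ∀ v ∈ domAs, (inner ℂ (As v) u : ℂ) = inner ℂ v (A u))
    (ε : ℝ) (hε : 0 < ε)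
    (hcoer : ∀ u ∈ domA, ε * ‖u‖ ^ 2 ≤ ‖A u‖ ^ 2)
    (lam0 : ℂ) (hlam0 : lam0 ≠ 0)
    (u v : H) (hu : u ∈ domA) (huA : A u ∈ domAs) (hv : v ∈ domA)
    (hne : ¬(u = 0 ∧ v = 0))
    (heig1 : Complex.I • v = lam0 • u)
    (heig2 : Complex.I • (-(As (A u)) - R v) = lam0 • v) :
    -- (v, -iAu) belongs to dom(A) ⊕ dom(A*) and is an eigenvector of Q + S for λ₀ :
    v ∈ domA ∧ (-Complex.I) • A u ∈ domAs ∧ ¬(v = 0 ∧ (-Complex.I) • A u = 0) ∧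
      (-Complex.I) • R v + As ((-Complex.I) • A u) = lam0 • v ∧
      A v = lam0 • ((-Complex.I) • A u) := by
  refine ⟨hv, domAs.smul_mem _ huA, ?_, ?_, ?_⟩
  · rintro ⟨hv0, hAu0⟩
    have hAu : A u = 0 := by
      have := congrArg (fun x => Complex.I • x) hAu0
      simpa [smul_smul, Complex.I_mul_I] using this
    have hu0 : u = 0 := by
      have h := hcoer u hu
      rw [hAu] at h
      simp only [norm_zero] at h
      have : ‖u‖ ^ 2 ≤ 0 := by nlinarith
      have : ‖u‖ = 0 := by nlinarith [sq_nonneg ‖u‖, norm_nonneg u]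
      simpa using this
    exact hne ⟨hu0, hv0⟩
  · rw [map_smul]
    have : (-Complex.I) • R v + (-Complex.I) • As (A u)
        = Complex.I • (-(As (A u)) - R v) := by
      rw [smul_sub, smul_neg]
      module
    rw [this, heig2]
  · have h := congrArg A heig1
    rw [map_smul, map_smul] at h
    have := congrArg (fun x => (-Complex.I) • x) h
    simp only [smul_smul] at this
    rw [show (-Complex.I) * Complex.I = 1 by simp [Complex.I_mul_I], one_smul] at this
    rw [this, smul_smul, mul_comm]
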